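/- (Alice–Bob–Alice, complements: revealing late is optimal.) Let W, X_A, X_B be finitely-valued random variables with X_A and X_B (unconditionally) independent, and let S be any deterministic function of X_A. Then Alice's total expected payment from revealing S(X_A) in stage 1 and the rest of X_A in stage 3 (after Bob reveals X_B) is at most her payment from revealing everything in stage 3: I(S(X_A); W) + I(X_A; W | (X_B, S(X_A))) ≤ I(X_A; W | X_B). -/

import Mathlib

open scoped BigOperators

noncomputable section

variable {Ω : Type*} [Fintype Ω]

/-- `μ` is a probability mass function on the finite sample space `Ω`. -/
def IsPmf (μ : Ω → ℝ) : Prop := (∀ ω, 0 ≤ μ ω) ∧ ∑ ω, μ ω = 1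

open Classical in
/-- Probability of the event `A` under the pmf `μ`. -/
def pr (μ : Ω → ℝ) (A : Ω → Prop) : ℝ := ∑ ω, if A ω then μ ω else 0

/-- Conditional probability of `A` given `B` (with the convention `x / 0 = 0`). -/
def cpr (μ : Ω → ℝ) (A B : Ω → Prop) : ℝ := pr μ (fun ω => A ω ∧ B ω) / pr μ B

open Classical in
/-- Mutual information between the random variables `X` and `Y`,
`I(X;Y) = Σ_{x,y} P[X=x,Y=y] log( P[X=x,Y=y] / (P[X=x]·P[Y=y]) )`. -/
def mi (μ : Ω → ℝ) {S T : Type*} (X : Ω → S) (Y : Ω → T) : ℝ :=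
  ∑ x ∈ Finset.univ.image X, ∑ y ∈ Finset.univ.image Y,
    pr μ (fun ω => X ω = x ∧ Y ω = y) *
      Real.log (pr μ (fun ω => X ω = x ∧ Y ω = y) /
        (pr μ (fun ω => X ω = x) * pr μ (fun ω => Y ω = y)))

open Classical in
/-- Mutual information between `X` and `Y` conditioned on the event `B`,
`I(X;Y|B) = Σ_{x,y} P[X=x,Y=y|B] log( P[X=x,Y=y|B] / (P[X=x|B]·P[Y=y|B]) )`. -/
def miOn (μ : Ω → ℝ) {S T : Type*} (X : Ω → S) (Y : Ω → T) (B : Ω → Prop) : ℝ :=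
  ∑ x ∈ Finset.univ.image X, ∑ y ∈ Finset.univ.image Y,
    cpr μ (fun ω => X ω = x ∧ Y ω = y) B *
      Real.log (cpr μ (fun ω => X ω = x ∧ Y ω = y) B /
        (cpr μ (fun ω => X ω = x) B * cpr μ (fun ω => Y ω = y) B))

open Classical in
/-- Conditional mutual information `I(X;Y|Z) = E_Z[ I(X;Y|Z=z) ]`. -/
def cmi (μ : Ω → ℝ) {S T U : Type*} (X : Ω → S) (Y : Ω → T) (Z : Ω → U) : ℝ :=
  ∑ z ∈ Finset.univ.image Z,
    pr μ (fun ω => Z ω = z) * miOn μ X Y (fun ω => Z ω = z)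

/-- `X` and `Y` are (unconditionally) independent under `μ`. -/
def Indep (μ : Ω → ℝ) {S T : Type*} (X : Ω → S) (Y : Ω → T) : Prop :=
  ∀ (x : S) (y : T),
    pr μ (fun ω => X ω = x ∧ Y ω = y) = pr μ (fun ω => X ω = x) * pr μ (fun ω => Y ω = y)

section AuxPr
variable (μ : Ω → ℝ)

lemma pr_nonneg (h : ∀ ω, 0 ≤ μ ω) (A : Ω → Prop) : 0 ≤ pr μ A := by
  classical
  refine Finset.sum_nonneg fun ω _ => ?_
  split <;> simp [h ω]

lemma pr_congr {A B : Ω → Prop} (h : ∀ ω, A ω ↔ B ω) : pr μ A = pr μ B := by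
  classical
  exact Finset.sum_congr rfl fun ω _ => if_congr (h ω) rfl rfl

lemma pr_mono (hμ : ∀ ω, 0 ≤ μ ω) {A B : Ω → Prop} (h : ∀ ω, A ω → B ω) :
    pr μ A ≤ pr μ B := by
  classical
  refine Finset.sum_le_sum fun ω _ => ?_
  by_cases hA : A ω
  · rw [if_pos hA, if_pos (h ω hA)]
  · rw [if_neg hA]
    split <;> simp [hμ ω]

lemma pr_pos (hμ : ∀ ω, 0 ≤ μ ω) {A : Ω → Prop} {ω₀ : Ω} (hA : A ω₀) (h0 : 0 < μ ω₀) :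
    0 < pr μ A := by
  classical
  have h1 : μ ω₀ ≤ pr μ A := by
    have := Finset.single_le_sum (f := fun ω => if A ω then μ ω else 0)
      (fun ω _ => by split <;> simp [hμ ω]) (Finset.mem_univ ω₀)
    simpa [pr, if_pos hA] using this
  linarith

/-- Evaluate a sum over the image at the point `X ω`, with an extra condition. -/
lemma sum_point {S : Type*} [DecidableEq S] (X : Ω → S) (ω : Ω) (P : S → Prop) (F : S → ℝ)
    [∀ x, Decidable (X ω = x ∧ P x)] [Decidable (P (X ω))] :
    (∑ x ∈ Finset.univ.image X, if X ω = x ∧ P x then F x else 0)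
      = if P (X ω) then F (X ω) else 0 := by
  refine (Finset.sum_eq_single (X ω) ?_ ?_).trans ?_
  · intro b _ hb
    rw [if_neg]
    rintro ⟨h1, -⟩
    exact hb h1.symm
  · intro hmem
    exact absurd (Finset.mem_image_of_mem X (Finset.mem_univ ω)) hmem
  · by_cases hP : P (X ω)
    · rw [if_pos ⟨rfl, hP⟩, if_pos hP]
    · rw [if_neg (fun hc => hP hc.2), if_neg hP]

/-- Evaluate a sum over the image at the point `X ω`. -/
lemma sum_point' {S : Type*} [DecidableEq S] (X : Ω → S) (ω : Ω) (F : S → ℝ)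
    [∀ x, Decidable (X ω = x)] :
    (∑ x ∈ Finset.univ.image X, if X ω = x then F x else 0) = F (X ω) := by
  refine (Finset.sum_eq_single (X ω) ?_ ?_).trans ?_
  · intro b _ hb
    rw [if_neg (fun h1 => hb h1.symm)]
  · intro hmem
    exact absurd (Finset.mem_image_of_mem X (Finset.mem_univ ω)) hmem
  · rw [if_pos rfl]

lemma sum_ite_and_left {α : Type*} (s : Finset α) (Q : Prop) (R : α → Prop) (F : α → ℝ)
    [∀ y, Decidable (Q ∧ R y)] [∀ y, Decidable (R y)] [Decidable Q] :
    (∑ y ∈ s, if Q ∧ R y then F y else 0)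
      = if Q then (∑ y ∈ s, if R y then F y else 0) else 0 := by
  by_cases hQ : Q
  · rw [if_pos hQ]
    refine Finset.sum_congr rfl fun y _ => ?_
    by_cases hR : R y
    · rw [if_pos ⟨hQ, hR⟩, if_pos hR]
    · rw [if_neg (fun hc => hR hc.2), if_neg hR]
  · rw [if_neg hQ]
    refine Finset.sum_eq_zero fun y _ => ?_
    rw [if_neg (fun hc => hQ hc.1)]

lemma sum_ite_const {α : Type*} (s : Finset α) (Q : Prop) [Decidable Q] (F : α → ℝ) :
    (∑ y ∈ s, if Q then F y else 0) = if Q then ∑ y ∈ s, F y else 0 := by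
  split_ifs <;> simp

open Classical in
lemma pr_fiber {S : Type*} (X : Ω → S) (B : Ω → Prop) :
    pr μ B = ∑ x ∈ Finset.univ.image X, pr μ (fun ω => X ω = x ∧ B ω) := by
  simp only [pr]
  rw [Finset.sum_comm]
  refine Finset.sum_congr rfl fun ω _ => ?_
  convert (sum_point X ω (fun _ => B ω) (fun _ => μ ω)).symm using 3

end AuxPr

section SumRep
variable (μ : Ω → ℝ)

open Classical in
lemma sum2 {S T : Type*} (X : Ω → S) (Y : Ω → T) (f : S → T → ℝ) :
    (∑ x ∈ Finset.univ.image X, ∑ y ∈ Finset.univ.image Y,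
      pr μ (fun ω => X ω = x ∧ Y ω = y) * f x y) = ∑ ω, μ ω * f (X ω) (Y ω) := by
  have key : ∀ (x : S) (y : T), pr μ (fun ω => X ω = x ∧ Y ω = y) * f x y
      = ∑ ω, if X ω = x ∧ Y ω = y then μ ω * f x y else 0 := by
    intro x y
    simp only [pr, Finset.sum_mul]
    refine Finset.sum_congr rfl fun ω _ => ?_
    by_cases h : X ω = x ∧ Y ω = y <;> simp [h]
  calc (∑ x ∈ Finset.univ.image X, ∑ y ∈ Finset.univ.image Y,
          pr μ (fun ω => X ω = x ∧ Y ω = y) * f x y)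
      = ∑ x ∈ Finset.univ.image X, ∑ y ∈ Finset.univ.image Y, ∑ ω,
          (if X ω = x ∧ Y ω = y then μ ω * f x y else 0) :=
        Finset.sum_congr rfl fun x _ => Finset.sum_congr rfl fun y _ => key x y
    _ = ∑ x ∈ Finset.univ.image X, ∑ ω, ∑ y ∈ Finset.univ.image Y,
          (if X ω = x ∧ Y ω = y then μ ω * f x y else 0) :=
        Finset.sum_congr rfl fun x _ => Finset.sum_comm
    _ = ∑ ω, ∑ x ∈ Finset.univ.image X, ∑ y ∈ Finset.univ.image Y,
          (if X ω = x ∧ Y ω = y then μ ω * f x y else 0) := Finset.sum_comm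
    _ = ∑ ω, μ ω * f (X ω) (Y ω) := by
        refine Finset.sum_congr rfl fun ω _ => ?_
        rw [Finset.sum_congr rfl fun x (_ : x ∈ Finset.univ.image X) =>
          sum_ite_and_left (Finset.univ.image Y) (X ω = x) (fun y => Y ω = y)
            (fun y => μ ω * f x y)]
        rw [Finset.sum_congr rfl fun x (_ : x ∈ Finset.univ.image X) =>
          (by rw [sum_point' Y ω (fun y => μ ω * f x y)] :
            (if X ω = x then ∑ y ∈ Finset.univ.image Y, (if Y ω = y then μ ω * f x y else 0)
              else 0) = if X ω = x then μ ω * f x (Y ω) else 0)]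
        rw [sum_point' X ω (fun x => μ ω * f x (Y ω))]

open Classical in
lemma sum3 {S T U : Type*} (X : Ω → S) (Y : Ω → T) (Z : Ω → U) (f : S → T → U → ℝ) :
    (∑ z ∈ Finset.univ.image Z, ∑ x ∈ Finset.univ.image X, ∑ y ∈ Finset.univ.image Y,
      pr μ (fun ω => Z ω = z ∧ X ω = x ∧ Y ω = y) * f x y z)
      = ∑ ω, μ ω * f (X ω) (Y ω) (Z ω) := by
  have key : ∀ (z : U) (x : S) (y : T),
      pr μ (fun ω => Z ω = z ∧ X ω = x ∧ Y ω = y) * f x y z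
      = ∑ ω, if Z ω = z ∧ X ω = x ∧ Y ω = y then μ ω * f x y z else 0 := by
    intro z x y
    simp only [pr, Finset.sum_mul]
    refine Finset.sum_congr rfl fun ω _ => ?_
    by_cases h : Z ω = z ∧ X ω = x ∧ Y ω = y <;> simp [h]
  calc (∑ z ∈ Finset.univ.image Z, ∑ x ∈ Finset.univ.image X, ∑ y ∈ Finset.univ.image Y,
          pr μ (fun ω => Z ω = z ∧ X ω = x ∧ Y ω = y) * f x y z)
      = ∑ z ∈ Finset.univ.image Z, ∑ x ∈ Finset.univ.image X, ∑ y ∈ Finset.univ.image Y, ∑ ω,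
          (if Z ω = z ∧ X ω = x ∧ Y ω = y then μ ω * f x y z else 0) :=
        Finset.sum_congr rfl fun z _ => Finset.sum_congr rfl fun x _ =>
          Finset.sum_congr rfl fun y _ => key z x y
    _ = ∑ z ∈ Finset.univ.image Z, ∑ x ∈ Finset.univ.image X, ∑ ω, ∑ y ∈ Finset.univ.image Y,
          (if Z ω = z ∧ X ω = x ∧ Y ω = y then μ ω * f x y z else 0) :=
        Finset.sum_congr rfl fun z _ => Finset.sum_congr rfl fun x _ => Finset.sum_comm
    _ = ∑ z ∈ Finset.univ.image Z, ∑ ω, ∑ x ∈ Finset.univ.image X, ∑ y ∈ Finset.univ.image Y,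
          (if Z ω = z ∧ X ω = x ∧ Y ω = y then μ ω * f x y z else 0) :=
        Finset.sum_congr rfl fun z _ => Finset.sum_comm
    _ = ∑ ω, ∑ z ∈ Finset.univ.image Z, ∑ x ∈ Finset.univ.image X, ∑ y ∈ Finset.univ.image Y,
          (if Z ω = z ∧ X ω = x ∧ Y ω = y then μ ω * f x y z else 0) := Finset.sum_comm
    _ = ∑ ω, μ ω * f (X ω) (Y ω) (Z ω) := by
        refine Finset.sum_congr rfl fun ω _ => ?_
        rw [Finset.sum_congr rfl fun z (_ : z ∈ Finset.univ.image Z) =>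
          Finset.sum_congr rfl fun x (_ : x ∈ Finset.univ.image X) =>
            sum_ite_and_left (Finset.univ.image Y) (Z ω = z) (fun y => X ω = x ∧ Y ω = y)
              (fun y => μ ω * f x y z)]
        rw [Finset.sum_congr rfl fun z (_ : z ∈ Finset.univ.image Z) =>
          Finset.sum_congr rfl fun x (_ : x ∈ Finset.univ.image X) =>
            (by rw [sum_ite_and_left (Finset.univ.image Y) (X ω = x) (fun y => Y ω = y)
                  (fun y => μ ω * f x y z), sum_point' Y ω (fun y => μ ω * f x y z)] :
              (if Z ω = z then
                  ∑ y ∈ Finset.univ.image Y, (if X ω = x ∧ Y ω = y then μ ω * f x y z else 0)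
                else 0)
              = if Z ω = z then (if X ω = x then μ ω * f x (Y ω) z else 0) else 0)]
        rw [Finset.sum_congr rfl fun z (_ : z ∈ Finset.univ.image Z) =>
          (by rw [sum_ite_const (Finset.univ.image X) (Z ω = z)
                (fun x => if X ω = x then μ ω * f x (Y ω) z else 0),
                sum_point' X ω (fun x => μ ω * f x (Y ω) z)] :
            (∑ x ∈ Finset.univ.image X,
                if Z ω = z then (if X ω = x then μ ω * f x (Y ω) z else 0) else 0)
            = if Z ω = z then μ ω * f (X ω) (Y ω) z else 0)]
        rw [sum_point' Z ω (fun z => μ ω * f (X ω) (Y ω) z)]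

end SumRep

lemma div_div_mul_helper (a b c d : ℝ) (hc : c ≠ 0) : (a / c) / ((b / c) * (d / c)) = a * c / (b * d) := by
  rcases eq_or_ne b 0 with hb | hb
  · simp [hb]
  rcases eq_or_ne d 0 with hd | hd
  · simp [hd]
  field_simp

open Classical in
lemma mi_omega (μ : Ω → ℝ) {S T : Type*} (X : Ω → S) (Y : Ω → T) :
    mi μ X Y = ∑ ω, μ ω * Real.log (pr μ (fun ω' => X ω' = X ω ∧ Y ω' = Y ω) /
      (pr μ (fun ω' => X ω' = X ω) * pr μ (fun ω' => Y ω' = Y ω))) := by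
  exact sum2 μ X Y fun x y => Real.log (pr μ (fun ω => X ω = x ∧ Y ω = y) /
    (pr μ (fun ω => X ω = x) * pr μ (fun ω => Y ω = y)))

open Classical in
lemma cmi_omega (μ : Ω → ℝ) (hμ0 : ∀ ω, 0 ≤ μ ω) {S T U : Type*}
    (X : Ω → S) (Y : Ω → T) (Z : Ω → U) :
    cmi μ X Y Z = ∑ ω, μ ω * Real.log (
      pr μ (fun ω' => Z ω' = Z ω ∧ X ω' = X ω ∧ Y ω' = Y ω) * pr μ (fun ω' => Z ω' = Z ω) /
      (pr μ (fun ω' => Z ω' = Z ω ∧ X ω' = X ω) * pr μ (fun ω' => Z ω' = Z ω ∧ Y ω' = Y ω))) := by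
  have step1 : cmi μ X Y Z
      = ∑ z ∈ Finset.univ.image Z, ∑ x ∈ Finset.univ.image X, ∑ y ∈ Finset.univ.image Y,
        pr μ (fun ω => Z ω = z ∧ X ω = x ∧ Y ω = y) *
          Real.log (pr μ (fun ω => Z ω = z ∧ X ω = x ∧ Y ω = y) * pr μ (fun ω => Z ω = z) /
            (pr μ (fun ω => Z ω = z ∧ X ω = x) * pr μ (fun ω => Z ω = z ∧ Y ω = y))) := by
    simp only [cmi, miOn, cpr, Finset.mul_sum]
    refine Finset.sum_congr rfl fun z _ => Finset.sum_congr rfl fun x _ =>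
      Finset.sum_congr rfl fun y _ => ?_
    have e1 : pr μ (fun ω => (X ω = x ∧ Y ω = y) ∧ Z ω = z)
        = pr μ (fun ω => Z ω = z ∧ X ω = x ∧ Y ω = y) := pr_congr μ fun ω => by tauto
    have e2 : pr μ (fun ω => X ω = x ∧ Z ω = z)
        = pr μ (fun ω => Z ω = z ∧ X ω = x) := pr_congr μ fun ω => and_comm
    have e3 : pr μ (fun ω => Y ω = y ∧ Z ω = z)
        = pr μ (fun ω => Z ω = z ∧ Y ω = y) := pr_congr μ fun ω => and_comm
    rw [e1, e2, e3]
    set q := pr μ (fun ω => Z ω = z ∧ X ω = x ∧ Y ω = y) with hq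
    set pz := pr μ (fun ω => Z ω = z) with hpz
    rcases eq_or_lt_of_le (pr_nonneg μ hμ0 (fun ω => Z ω = z ∧ X ω = x ∧ Y ω = y)) with h0 | h0
    · rw [← hq] at h0
      rw [← h0]
      simp
    · rw [← hq] at h0
      have hz : 0 < pz := lt_of_lt_of_le h0 (pr_mono μ hμ0 fun ω hω => hω.1)
      rw [div_div_mul_helper _ _ _ _ hz.ne']
      rw [← mul_assoc, mul_div_cancel₀ _ hz.ne']
  rw [step1]
  exact sum3 μ X Y Z fun x y z =>
    Real.log (pr μ (fun ω => Z ω = z ∧ X ω = x ∧ Y ω = y) * pr μ (fun ω => Z ω = z) /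
      (pr μ (fun ω => Z ω = z ∧ X ω = x) * pr μ (fun ω => Z ω = z ∧ Y ω = y)))

lemma gibbs_term {t r : ℝ} (ht : 0 ≤ t) (hr : 0 ≤ r) (h : 0 < t → 0 < r) :
    t - r ≤ t * Real.log (t / r) := by
  rcases eq_or_lt_of_le ht with h0 | h0
  · simp [← h0, hr]
  · have hr' := h h0
    have hlog : Real.log (r / t) ≤ r / t - 1 := Real.log_le_sub_one_of_pos (by positivity)
    have hinv : Real.log (t / r) = - Real.log (r / t) := by
      rw [← Real.log_inv]
      congr 1
      rw [inv_div]
    rw [hinv]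
    have h2 : t * Real.log (r / t) ≤ t * (r / t - 1) :=
      mul_le_mul_of_nonneg_left hlog h0.le
    have h3 : t * (r / t - 1) = r - t := by field_simp
    nlinarith

open Classical in
lemma sum_cpr_one (μ : Ω → ℝ) {B : Ω → Prop} (hB : pr μ B ≠ 0) {S : Type*} (X : Ω → S) :
    ∑ x ∈ Finset.univ.image X, cpr μ (fun ω => X ω = x) B = 1 := by
  simp only [cpr]
  rw [← Finset.sum_div, ← pr_fiber μ X B, div_self hB]

open Classical in
lemma sum_cpr2_one (μ : Ω → ℝ) {B : Ω → Prop} (hB : pr μ B ≠ 0) {S T : Type*}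
    (X : Ω → S) (Y : Ω → T) :
    (∑ x ∈ Finset.univ.image X, ∑ y ∈ Finset.univ.image Y,
      cpr μ (fun ω => X ω = x ∧ Y ω = y) B) = 1 := by
  simp only [cpr]
  have inner : ∀ x : S, (∑ y ∈ Finset.univ.image Y,
      pr μ (fun ω => (X ω = x ∧ Y ω = y) ∧ B ω)) = pr μ (fun ω => X ω = x ∧ B ω) := by
    intro x
    rw [pr_fiber μ Y (fun ω => X ω = x ∧ B ω)]
    exact Finset.sum_congr rfl fun y _ => pr_congr μ fun ω => by tauto
  calc (∑ x ∈ Finset.univ.image X, ∑ y ∈ Finset.univ.image Y,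
          pr μ (fun ω => (X ω = x ∧ Y ω = y) ∧ B ω) / pr μ B)
      = ∑ x ∈ Finset.univ.image X, pr μ (fun ω => X ω = x ∧ B ω) / pr μ B :=
        Finset.sum_congr rfl fun x _ => by rw [← Finset.sum_div, inner x]
    _ = 1 := by rw [← Finset.sum_div, ← pr_fiber μ X B, div_self hB]

open Classical in
lemma miOn_nonneg (μ : Ω → ℝ) (hμ0 : ∀ ω, 0 ≤ μ ω) {S T : Type*}
    (X : Ω → S) (Y : Ω → T) {B : Ω → Prop} (hB : 0 < pr μ B) :
    0 ≤ miOn μ X Y B := by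
  have hcnn : ∀ (A : Ω → Prop), 0 ≤ cpr μ A B :=
    fun A => div_nonneg (pr_nonneg μ hμ0 _) (pr_nonneg μ hμ0 _)
  have bound : ∀ (x : S) (y : T),
      cpr μ (fun ω => X ω = x ∧ Y ω = y) B
          - cpr μ (fun ω => X ω = x) B * cpr μ (fun ω => Y ω = y) B
        ≤ cpr μ (fun ω => X ω = x ∧ Y ω = y) B *
            Real.log (cpr μ (fun ω => X ω = x ∧ Y ω = y) B /
              (cpr μ (fun ω => X ω = x) B * cpr μ (fun ω => Y ω = y) B)) := by
    intro x y
    refine gibbs_term (hcnn _) (mul_nonneg (hcnn _) (hcnn _)) fun ht => ?_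
    have hnum : 0 < pr μ (fun ω => (X ω = x ∧ Y ω = y) ∧ B ω) := by
      by_contra hc
      push_neg at hc
      have : pr μ (fun ω => (X ω = x ∧ Y ω = y) ∧ B ω) = 0 :=
        le_antisymm hc (pr_nonneg μ hμ0 _)
      rw [cpr, this, zero_div] at ht
      exact lt_irrefl 0 ht
    have hx : 0 < cpr μ (fun ω => X ω = x) B := by
      rw [cpr]
      refine div_pos (lt_of_lt_of_le hnum (pr_mono μ hμ0 fun ω hω => ⟨hω.1.1, hω.2⟩)) hB
    have hy : 0 < cpr μ (fun ω => Y ω = y) B := by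
      rw [cpr]
      refine div_pos (lt_of_lt_of_le hnum (pr_mono μ hμ0 fun ω hω => ⟨hω.1.2, hω.2⟩)) hB
    exact mul_pos hx hy
  have hsum1 := sum_cpr2_one μ hB.ne' X Y
  have hsumx := sum_cpr_one μ hB.ne' X
  have hsumy := sum_cpr_one μ hB.ne' Y
  have hprod : (∑ x ∈ Finset.univ.image X, ∑ y ∈ Finset.univ.image Y,
      cpr μ (fun ω => X ω = x) B * cpr μ (fun ω => Y ω = y) B) = 1 := by
    calc (∑ x ∈ Finset.univ.image X, ∑ y ∈ Finset.univ.image Y,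
            cpr μ (fun ω => X ω = x) B * cpr μ (fun ω => Y ω = y) B)
        = ∑ x ∈ Finset.univ.image X, cpr μ (fun ω => X ω = x) B *
            (∑ y ∈ Finset.univ.image Y, cpr μ (fun ω => Y ω = y) B) :=
          Finset.sum_congr rfl fun x _ => by rw [Finset.mul_sum]
      _ = 1 := by rw [hsumy]; simpa using hsumx
  have main : (∑ x ∈ Finset.univ.image X, ∑ y ∈ Finset.univ.image Y,
        (cpr μ (fun ω => X ω = x ∧ Y ω = y) B
          - cpr μ (fun ω => X ω = x) B * cpr μ (fun ω => Y ω = y) B))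
      ≤ miOn μ X Y B := by
    rw [miOn]
    exact Finset.sum_le_sum fun x _ => Finset.sum_le_sum fun y _ => bound x y
  have expand : (∑ x ∈ Finset.univ.image X, ∑ y ∈ Finset.univ.image Y,
        (cpr μ (fun ω => X ω = x ∧ Y ω = y) B
          - cpr μ (fun ω => X ω = x) B * cpr μ (fun ω => Y ω = y) B)) = 0 := by
    rw [Finset.sum_congr rfl fun x (_ : x ∈ Finset.univ.image X) => Finset.sum_sub_distrib _ _,
      Finset.sum_sub_distrib, hsum1, hprod]
    ring
  linarith [main, expand ▸ main]

open Classical in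
lemma cmi_nonneg (μ : Ω → ℝ) (hμ0 : ∀ ω, 0 ≤ μ ω) {S T U : Type*}
    (X : Ω → S) (Y : Ω → T) (Z : Ω → U) : 0 ≤ cmi μ X Y Z := by
  rw [cmi]
  refine Finset.sum_nonneg fun z _ => ?_
  rcases eq_or_lt_of_le (pr_nonneg μ hμ0 (fun ω => Z ω = z)) with h0 | h0
  · rw [← h0, zero_mul]
  · exact mul_nonneg h0.le (miOn_nonneg μ hμ0 X Y h0)

open Classical in
lemma indep_comp (μ : Ω → ℝ) {SA SB V : Type*} (XA : Ω → SA) (XB : Ω → SB)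
    (h : Indep μ XA XB) (S' : SA → V) (v : V) (b : SB) :
    pr μ (fun ω => S' (XA ω) = v ∧ XB ω = b)
      = pr μ (fun ω => S' (XA ω) = v) * pr μ (fun ω => XB ω = b) := by
  have hF : pr μ (fun _ : Ω => False) = 0 := by simp [pr]
  have h1 := pr_fiber μ XA (fun ω => S' (XA ω) = v ∧ XB ω = b)
  have h2 := pr_fiber μ XA (fun ω => S' (XA ω) = v)
  rw [h1, h2, Finset.sum_mul]
  refine Finset.sum_congr rfl fun a _ => ?_
  by_cases hv : S' a = v
  · have c1 : pr μ (fun ω => XA ω = a ∧ S' (XA ω) = v ∧ XB ω = b)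
        = pr μ (fun ω => XA ω = a ∧ XB ω = b) := pr_congr μ fun ω => by
      constructor
      · rintro ⟨ha, -, hb⟩; exact ⟨ha, hb⟩
      · rintro ⟨ha, hb⟩; exact ⟨ha, by rw [ha, hv], hb⟩
    have c2 : pr μ (fun ω => XA ω = a ∧ S' (XA ω) = v)
        = pr μ (fun ω => XA ω = a) := pr_congr μ fun ω => by
      constructor
      · rintro ⟨ha, -⟩; exact ha
      · intro ha; exact ⟨ha, by rw [ha, hv]⟩
    rw [c1, c2, h a b]
  · have c1 : pr μ (fun ω => XA ω = a ∧ S' (XA ω) = v ∧ XB ω = b)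
        = pr μ (fun _ => False) := pr_congr μ fun ω => by
      constructor
      · rintro ⟨ha, hv', -⟩; exact hv (by rw [← ha]; exact hv')
      · exact False.elim
    have c2 : pr μ (fun ω => XA ω = a ∧ S' (XA ω) = v)
        = pr μ (fun _ => False) := pr_congr μ fun ω => by
      constructor
      · rintro ⟨ha, hv'⟩; exact hv (by rw [← ha]; exact hv')
      · exact False.elim
    rw [c1, c2, hF, zero_mul]

lemma log_sub4 {a b c d : ℝ} (ha : 0 < a) (hb : 0 < b) (hc : 0 < c) (hd : 0 < d) :
    Real.log (a * b / (c * d)) = Real.log a + Real.log b - Real.log c - Real.log d := by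
  rw [Real.log_div (by positivity) (by positivity), Real.log_mul ha.ne' hb.ne',
    Real.log_mul hc.ne' hd.ne']
  ring

lemma log_sub3 {a c d : ℝ} (ha : 0 < a) (hc : 0 < c) (hd : 0 < d) :
    Real.log (a / (c * d)) = Real.log a - Real.log c - Real.log d := by
  rw [Real.log_div ha.ne' (by positivity), Real.log_mul hc.ne' hd.ne']
  ring

/-- Alice–Bob–Alice with complements: if `X_A` and `X_B` are (unconditionally)
independent and `S'` is any deterministic function of `X_A`'s values, then Alice's
total expected payment from revealing `S'(X_A)` in stage 1 and the rest of `X_A` in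
stage 3 (after Bob reveals `X_B`) is at most her payment from revealing everything
in stage 3: `I(S'(X_A); W) + I(X_A; W | (X_B, S'(X_A))) ≤ I(X_A; W | X_B)`. -/
theorem aba_complements_reveal_late
    {SA SB T V : Type*} (μ : Ω → ℝ) (hμ : IsPmf μ)
    (W : Ω → T) (XA : Ω → SA) (XB : Ω → SB)
    (h : Indep μ XA XB) (S' : SA → V) :
    mi μ (fun ω => S' (XA ω)) W +
        cmi μ XA W (fun ω => (XB ω, S' (XA ω)))
      ≤ cmi μ XA W XB := by
  obtain ⟨hμ0, hμ1⟩ := hμ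
  have hEnn : 0 ≤ cmi μ (fun ω => S' (XA ω)) XB W := cmi_nonneg μ hμ0 _ _ _
  have key : cmi μ XA W XB = mi μ (fun ω => S' (XA ω)) W
      + cmi μ XA W (fun ω => (XB ω, S' (XA ω)))
      + cmi μ (fun ω => S' (XA ω)) XB W := by
    rw [mi_omega μ (fun ω => S' (XA ω)) W,
      cmi_omega μ hμ0 XA W (fun ω => (XB ω, S' (XA ω))),
      cmi_omega μ hμ0 XA W XB,
      cmi_omega μ hμ0 (fun ω => S' (XA ω)) XB W,
      ← Finset.sum_add_distrib, ← Finset.sum_add_distrib]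
    refine Finset.sum_congr rfl fun ω _ => ?_
    rcases eq_or_lt_of_le (hμ0 ω) with h0 | h0
    · rw [← h0]; ring
    · -- canonical probabilities at ω
      have hpair : ∀ ω' : Ω, (XB ω', S' (XA ω')) = (XB ω, S' (XA ω))
          ↔ (XB ω' = XB ω ∧ S' (XA ω') = S' (XA ω)) := fun ω' => by rw [Prod.mk.injEq]
      have B1 : pr μ (fun ω' => (XB ω', S' (XA ω')) = (XB ω, S' (XA ω)) ∧ XA ω' = XA ω ∧ W ω' = W ω)
          = pr μ (fun ω' => XB ω' = XB ω ∧ XA ω' = XA ω ∧ W ω' = W ω) := pr_congr μ fun ω' => by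
        rw [hpair ω']
        constructor
        · rintro ⟨⟨hb, -⟩, ha, hw⟩; exact ⟨hb, ha, hw⟩
        · rintro ⟨hb, ha, hw⟩; exact ⟨⟨hb, by rw [ha]⟩, ha, hw⟩
      have B2 : pr μ (fun ω' => (XB ω', S' (XA ω')) = (XB ω, S' (XA ω)))
          = pr μ (fun ω' => XB ω' = XB ω ∧ S' (XA ω') = S' (XA ω)) := pr_congr μ fun ω' => by
        rw [hpair ω']
      have B3 : pr μ (fun ω' => (XB ω', S' (XA ω')) = (XB ω, S' (XA ω)) ∧ XA ω' = XA ω)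
          = pr μ (fun ω' => XB ω' = XB ω ∧ XA ω' = XA ω) := pr_congr μ fun ω' => by
        rw [hpair ω']
        constructor
        · rintro ⟨⟨hb, -⟩, ha⟩; exact ⟨hb, ha⟩
        · rintro ⟨hb, ha⟩; exact ⟨⟨hb, by rw [ha]⟩, ha⟩
      have B4 : pr μ (fun ω' => (XB ω', S' (XA ω')) = (XB ω, S' (XA ω)) ∧ W ω' = W ω)
          = pr μ (fun ω' => XB ω' = XB ω ∧ S' (XA ω') = S' (XA ω) ∧ W ω' = W ω) :=
        pr_congr μ fun ω' => by rw [hpair ω']; tauto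
      have E1 : pr μ (fun ω' => W ω' = W ω ∧ S' (XA ω') = S' (XA ω) ∧ XB ω' = XB ω)
          = pr μ (fun ω' => XB ω' = XB ω ∧ S' (XA ω') = S' (XA ω) ∧ W ω' = W ω) :=
        pr_congr μ fun ω' => by tauto
      have E2 : pr μ (fun ω' => W ω' = W ω ∧ S' (XA ω') = S' (XA ω))
          = pr μ (fun ω' => S' (XA ω') = S' (XA ω) ∧ W ω' = W ω) :=
        pr_congr μ fun ω' => by tauto
      have E3 : pr μ (fun ω' => W ω' = W ω ∧ XB ω' = XB ω)
          = pr μ (fun ω' => XB ω' = XB ω ∧ W ω' = W ω) :=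
        pr_congr μ fun ω' => by tauto
      have hind : pr μ (fun ω' => XB ω' = XB ω ∧ S' (XA ω') = S' (XA ω))
          = pr μ (fun ω' => S' (XA ω') = S' (XA ω)) * pr μ (fun ω' => XB ω' = XB ω) := by
        rw [pr_congr μ (fun ω' => (and_comm : _ ↔ _)), indep_comp μ XA XB h S']
      have hpbaw : 0 < pr μ (fun ω' => XB ω' = XB ω ∧ XA ω' = XA ω ∧ W ω' = W ω) :=
        pr_pos μ hμ0 ⟨rfl, rfl, rfl⟩ h0
      have hpb : 0 < pr μ (fun ω' => XB ω' = XB ω) := pr_pos μ hμ0 rfl h0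
      have hpba : 0 < pr μ (fun ω' => XB ω' = XB ω ∧ XA ω' = XA ω) :=
        pr_pos μ hμ0 ⟨rfl, rfl⟩ h0
      have hpbw : 0 < pr μ (fun ω' => XB ω' = XB ω ∧ W ω' = W ω) :=
        pr_pos μ hμ0 ⟨rfl, rfl⟩ h0
      have hpvw : 0 < pr μ (fun ω' => S' (XA ω') = S' (XA ω) ∧ W ω' = W ω) :=
        pr_pos μ hμ0 ⟨rfl, rfl⟩ h0
      have hpv : 0 < pr μ (fun ω' => S' (XA ω') = S' (XA ω)) := pr_pos μ hμ0 rfl h0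
      have hpw : 0 < pr μ (fun ω' => W ω' = W ω) := pr_pos μ hμ0 rfl h0
      have hpbv : 0 < pr μ (fun ω' => XB ω' = XB ω ∧ S' (XA ω') = S' (XA ω)) :=
        pr_pos μ hμ0 ⟨rfl, rfl⟩ h0
      have hpbvw : 0 < pr μ (fun ω' => XB ω' = XB ω ∧ S' (XA ω') = S' (XA ω) ∧ W ω' = W ω) :=
        pr_pos μ hμ0 ⟨rfl, rfl, rfl⟩ h0
      rw [B1, B2, B3, B4, E1, E2, E3]
      rw [log_sub4 hpbaw hpb hpba hpbw, log_sub3 hpvw hpv hpw,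
        log_sub4 hpbaw hpbv hpba hpbvw, log_sub4 hpbvw hpw hpvw hpbw,
        hind, Real.log_mul hpv.ne' hpb.ne']
      ring
  linarith
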